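/- In every play of the graph game on (G, C, s, R), for each i = 1,…,n−1 the i-th move of the play goes from active vertex g_{i−1} to g_i, and this move is made by the ∃-player if i is odd and by the ∀-player if i is even. -/

import Mathlib

namespace PhutballQBF

/-- A literal: a variable `xₗ` (`pos l`) or its negation `¬xₗ` (`neg l`). -/
inductive Lit where
  | pos (l : ℕ)
  | neg (l : ℕ)
deriving DecidableEq

/-- The index of the variable occurring in a literal. -/
def Lit.var : Lit → ℕ
  | .pos l => l
  | .neg l => l

/-- Evaluation of a literal under a Boolean assignment. -/
def Lit.eval (σ : ℕ → Bool) : Lit → Bool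
  | .pos l => σ l
  | .neg l => !(σ l)

/-- Well-formedness of the 3CNF `F = F₁ ∧ ⋯ ∧ F_m`: the literal `l_{i,j}` (for
`1 ≤ i ≤ m`, `1 ≤ j ≤ 3`) mentions one of the variables `x₁, …, xₙ`. -/
def LitWF (n m : ℕ) (lit : ℕ → ℕ → Lit) : Prop :=
  ∀ i j, 1 ≤ i → i ≤ m → 1 ≤ j → j ≤ 3 → 1 ≤ (lit i j).var ∧ (lit i j).var ≤ n

/-- The clause `Fᵢ = (l_{i,1} ∨ l_{i,2} ∨ l_{i,3})` evaluates to true under `σ`. -/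
def ClauseTrue (lit : ℕ → ℕ → Lit) (i : ℕ) (σ : ℕ → Bool) : Prop :=
  ∃ j, 1 ≤ j ∧ j ≤ 3 ∧ (lit i j).eval σ = true

/-- The 3CNF formula `F = F₁ ∧ ⋯ ∧ F_m` evaluates to true under `σ`. -/
def FTrue (lit : ℕ → ℕ → Lit) (m : ℕ) (σ : ℕ → Bool) : Prop :=
  ∀ i, 1 ≤ i → i ≤ m → ClauseTrue lit i σ

/-- `QAux P i k σ`: the quantified statement with `k` variables `x_i, …, x_{i+k-1}`
still to be quantified (existentially when the index is odd, universally when even),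
the remaining variables having the values recorded in `σ`. -/
def QAux (P : (ℕ → Bool) → Prop) : ℕ → ℕ → (ℕ → Bool) → Prop
  | _, 0, σ => P σ
  | i, k + 1, σ =>
      if i % 2 = 1 then ∃ b, QAux P (i + 1) k (Function.update σ i b)
      else ∀ b, QAux P (i + 1) k (Function.update σ i b)

/-- Truth of the restricted quantified Boolean formula
`Q = ∃x₁ ∀x₂ ∃x₃ ⋯ ∀xₙ F(x₁, …, xₙ)`. -/
def QTrue (n m : ℕ) (lit : ℕ → ℕ → Lit) : Prop :=
  QAux (FTrue lit m) 1 n (fun _ => false)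

/-- The vertices of the graph `G` built from `Q` (with natural-number indices;
`g 0` is the extra vertex `g₀`). -/
inductive Vtx where
  | a (i : ℕ) | b (i : ℕ) | c (i : ℕ) | d (i : ℕ) | e (i : ℕ) | f (i : ℕ) | g (i : ℕ)
  | x (i : ℕ) | y (i : ℕ) | z (i : ℕ) | w (i : ℕ) (j : ℕ)
deriving DecidableEq

/-- A directed edge. -/
abbrev Edge := Vtx × Vtx

/-- The edge set `E(G)` of the graph `G` constructed from `Q` (with `n` variables and
`m` clauses): the variable components `G(xᵢ)`, the connecting edges `(gᵢ, aᵢ₊₁)` for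
`i = 0, …, n-1`, the edge `(gₙ, x₁)`, and the formula component `G(F)`. -/
def EG (n m : ℕ) : Set Edge :=
  { p | (∃ i, 1 ≤ i ∧ i ≤ n ∧
          (p = (Vtx.a i, Vtx.b i) ∨ p = (Vtx.a i, Vtx.c i) ∨ p = (Vtx.b i, Vtx.e i) ∨
           p = (Vtx.c i, Vtx.f i) ∨ p = (Vtx.e i, Vtx.d i) ∨ p = (Vtx.f i, Vtx.d i) ∨
           p = (Vtx.d i, Vtx.g i))) ∨
        (∃ i, i ≤ n - 1 ∧ p = (Vtx.g i, Vtx.a (i + 1))) ∨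
        p = (Vtx.g n, Vtx.x 1) ∨
        (∃ i, 1 ≤ i ∧ i ≤ m ∧
          (p = (Vtx.x i, Vtx.y i) ∨ p = (Vtx.y i, Vtx.z i) ∨ p = (Vtx.z i, Vtx.w i 1) ∨
           p = (Vtx.w i 1, Vtx.w i 2) ∨ p = (Vtx.w i 2, Vtx.w i 3))) ∨
        (∃ i, 1 ≤ i ∧ i ≤ m - 1 ∧ p = (Vtx.x i, Vtx.x (i + 1))) }

/-- The set `C = {g₀, g₁, …, g_{n-1}} ∪ {z₁, …, z_m}`. -/
def Cset (n m : ℕ) : Set Vtx :=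
  { v | (∃ i, i ≤ n - 1 ∧ v = Vtx.g i) ∨ (∃ i, 1 ≤ i ∧ i ≤ m ∧ v = Vtx.z i) }

/-- The relation `R ⊆ V(G) × E(G)`: `(w_{i,j}, (bₗ, eₗ)) ∈ R` iff `l_{i,j} = xₗ`, and
`(w_{i,j}, (cₗ, fₗ)) ∈ R` iff `l_{i,j} = ¬xₗ`. -/
def Rrel (lit : ℕ → ℕ → Lit) (m : ℕ) : Set (Vtx × Edge) :=
  { p | ∃ i j, 1 ≤ i ∧ i ≤ m ∧ 1 ≤ j ∧ j ≤ 3 ∧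
        ((∃ l, lit i j = Lit.pos l ∧ p = (Vtx.w i j, (Vtx.b l, Vtx.e l))) ∨
         (∃ l, lit i j = Lit.neg l ∧ p = (Vtx.w i j, (Vtx.c l, Vtx.f l)))) }

/-- `Rinv R E = R⁻¹(E)`: the vertices pointing some edge of `E`. -/
def Rinv (R : Set (Vtx × Edge)) (E : Set Edge) : Set Vtx :=
  { v | ∃ e ∈ E, (v, e) ∈ R }

/-- The set of (directed) edges traversed by a path given as its list of vertices. -/
def pathEdges (p : List Vtx) : Set Edge := { e | e ∈ p.zip p.tail }

/-- A legal move of the graph game from active vertex `u ∈ C` with current edge set `E`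
along the directed path `p` (a list of at least two pairwise distinct vertices whose
consecutive pairs are edges of `E`), ending at a vertex `v ∈ C ∪ R⁻¹(E)`, with all
internal vertices of `p` outside `C ∪ R⁻¹(E)`; the resulting edge set `E'` is obtained
by deleting the edges of `p` from `E`. -/
def LegalMoveVia (C : Set Vtx) (R : Set (Vtx × Edge))
    (u : Vtx) (E : Set Edge) (v : Vtx) (E' : Set Edge) (p : List Vtx) : Prop :=
  u ∈ C ∧ v ∈ C ∪ Rinv R E ∧
  2 ≤ p.length ∧ p.Nodup ∧
  p.head? = some u ∧ p.getLast? = some v ∧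
  List.Chain' (fun a b => (a, b) ∈ E) p ∧
  (∀ w ∈ (p.drop 1).dropLast, w ∉ C ∪ Rinv R E) ∧
  E' = E \ pathEdges p

/-- A legal move from `(u, E)` to `(v, E')` (along some path). -/
def LegalMove (C : Set Vtx) (R : Set (Vtx × Edge))
    (u : Vtx) (E : Set Edge) (v : Vtx) (E' : Set Edge) : Prop :=
  ∃ p, LegalMoveVia C R u E v E' p

/-- `MoverWins C R true u E` says that the player to move at the position with active
vertex `u` and current edge set `E` has a winning strategy; `MoverWins C R false u E`
says that the player to move loses whatever he does (in particular, if he has no legal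
move he loses immediately; a move to a vertex of `R⁻¹(E)` wins the game for the mover). -/
inductive MoverWins (C : Set Vtx) (R : Set (Vtx × Edge)) : Bool → Vtx → Set Edge → Prop
  | winsNow {u E v E'} : LegalMove C R u E v E' → v ∈ Rinv R E →
      MoverWins C R true u E
  | winsLater {u E v E'} : LegalMove C R u E v E' → MoverWins C R false v E' →
      MoverWins C R true u E
  | loses {u E} :
      (∀ v E', LegalMove C R u E v E' → v ∉ Rinv R E) →
      (∀ v E', LegalMove C R u E v E' → MoverWins C R true v E') →
      MoverWins C R false u E

/-- The two players of the graph game. -/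
inductive Player where
  | ex | fa
deriving DecidableEq

/-- The opponent of a player. -/
def Player.other : Player → Player
  | .ex => .fa
  | .fa => .ex

/-- A (maximal) play of the graph game on `(G, C, s, R)` starting from active vertex `s`
and edge set `E0`, with the ∃-player moving first.  `act k` and `edg k` are the active
vertex and edge set after `k` moves, `turn k` is the player who makes the `(k+1)`-st
move, and `len` is the total number of moves.  The play stops either because its last
move reached a vertex of `R⁻¹(E)` (the mover wins) or because the player to move has no
legal move (he loses); before that, no move may end in `R⁻¹(E)` without stopping. -/
structure Play (C : Set Vtx) (R : Set (Vtx × Edge)) (s : Vtx) (E0 : Set Edge) where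
  len : ℕ
  act : ℕ → Vtx
  edg : ℕ → Set Edge
  turn : ℕ → Player
  init_act : act 0 = s
  init_edg : edg 0 = E0
  init_turn : turn 0 = Player.ex
  turn_alt : ∀ k, turn (k + 1) = (turn k).other
  step : ∀ k, k < len → LegalMove C R (act k) (edg k) (act (k + 1)) (edg (k + 1))
  not_over : ∀ k, k + 1 < len → act (k + 1) ∉ Rinv R (edg k)
  maximal : (0 < len ∧ act len ∈ Rinv R (edg (len - 1))) ∨
            (∀ v E', ¬ LegalMove C R (act len) (edg len) v E')


section Helpers
variable {n m : ℕ} {lit : ℕ → ℕ → Lit}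

lemma rinv_sub {E : Set Edge} {v : Vtx} (h : v ∈ Rinv (Rrel lit m) E) :
    ∃ i j, v = Vtx.w i j := by
  obtain ⟨e, -, i, j, -, -, -, -, (⟨l, -, h⟩ | ⟨l, -, h⟩)⟩ := h <;>
    exact ⟨i, j, congrArg Prod.fst h⟩

lemma g_out {k : ℕ} (hk : k < n) {v : Vtx} (h : (Vtx.g k, v) ∈ EG n m) :
    v = Vtx.a (k + 1) := by
  rcases h with ⟨i, hi1, hi2, (h|h|h|h|h|h|h)⟩ | ⟨i, hi, h⟩ | h | ⟨i, hi1, hi2, (h|h|h|h|h)⟩ |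
    ⟨i, hi1, hi2, h⟩ <;> simp [Prod.ext_iff] at h
  · obtain ⟨rfl, rfl⟩ := h; rfl
  · omega

lemma a_out {k : ℕ} {v : Vtx} (h : (Vtx.a k, v) ∈ EG n m) :
    v = Vtx.b k ∨ v = Vtx.c k := by
  rcases h with ⟨i, hi1, hi2, (h|h|h|h|h|h|h)⟩ | ⟨i, hi, h⟩ | h | ⟨i, hi1, hi2, (h|h|h|h|h)⟩ |
    ⟨i, hi1, hi2, h⟩ <;> simp [Prod.ext_iff] at h
  · obtain ⟨rfl, rfl⟩ := h; left; rfl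
  · obtain ⟨rfl, rfl⟩ := h; right; rfl

lemma b_out {k : ℕ} {v : Vtx} (h : (Vtx.b k, v) ∈ EG n m) : v = Vtx.e k := by
  rcases h with ⟨i, hi1, hi2, (h|h|h|h|h|h|h)⟩ | ⟨i, hi, h⟩ | h | ⟨i, hi1, hi2, (h|h|h|h|h)⟩ |
    ⟨i, hi1, hi2, h⟩ <;> simp [Prod.ext_iff] at h
  obtain ⟨rfl, rfl⟩ := h; rfl

lemma c_out {k : ℕ} {v : Vtx} (h : (Vtx.c k, v) ∈ EG n m) : v = Vtx.f k := by
  rcases h with ⟨i, hi1, hi2, (h|h|h|h|h|h|h)⟩ | ⟨i, hi, h⟩ | h | ⟨i, hi1, hi2, (h|h|h|h|h)⟩ |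
    ⟨i, hi1, hi2, h⟩ <;> simp [Prod.ext_iff] at h
  obtain ⟨rfl, rfl⟩ := h; rfl

lemma e_out {k : ℕ} {v : Vtx} (h : (Vtx.e k, v) ∈ EG n m) : v = Vtx.d k := by
  rcases h with ⟨i, hi1, hi2, (h|h|h|h|h|h|h)⟩ | ⟨i, hi, h⟩ | h | ⟨i, hi1, hi2, (h|h|h|h|h)⟩ |
    ⟨i, hi1, hi2, h⟩ <;> simp [Prod.ext_iff] at h
  obtain ⟨rfl, rfl⟩ := h; rfl

lemma f_out {k : ℕ} {v : Vtx} (h : (Vtx.f k, v) ∈ EG n m) : v = Vtx.d k := by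
  rcases h with ⟨i, hi1, hi2, (h|h|h|h|h|h|h)⟩ | ⟨i, hi, h⟩ | h | ⟨i, hi1, hi2, (h|h|h|h|h)⟩ |
    ⟨i, hi1, hi2, h⟩ <;> simp [Prod.ext_iff] at h
  obtain ⟨rfl, rfl⟩ := h; rfl

lemma d_out {k : ℕ} {v : Vtx} (h : (Vtx.d k, v) ∈ EG n m) : v = Vtx.g k := by
  rcases h with ⟨i, hi1, hi2, (h|h|h|h|h|h|h)⟩ | ⟨i, hi, h⟩ | h | ⟨i, hi1, hi2, (h|h|h|h|h)⟩ |
    ⟨i, hi1, hi2, h⟩ <;> simp [Prod.ext_iff] at h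
  obtain ⟨rfl, rfl⟩ := h; rfl

lemma g_in_C {k : ℕ} (hk : k ≤ n - 1) : Vtx.g k ∈ Cset n m :=
  Or.inl ⟨k, hk, rfl⟩

lemma endpoint_cases {v : Vtx} {E : Set Edge}
    (h : v ∈ Cset n m ∪ Rinv (Rrel lit m) E) :
    (∃ i, i ≤ n - 1 ∧ v = Vtx.g i) ∨ (∃ i, 1 ≤ i ∧ i ≤ m ∧ v = Vtx.z i) ∨
    (∃ i j, v = Vtx.w i j) := by
  rcases h with (h | h) | h
  · exact Or.inl h
  · exact Or.inr (Or.inl h)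
  · exact Or.inr (Or.inr (rinv_sub h))

lemma not_endpoint_a {E : Set Edge} {i : ℕ} (h : Vtx.a i ∈ Cset n m ∪ Rinv (Rrel lit m) E) :
    False := by
  rcases endpoint_cases h with ⟨i, -, h⟩ | ⟨i, -, -, h⟩ | ⟨i, j, h⟩ <;> simp at h

lemma not_endpoint_b {E : Set Edge} {i : ℕ} (h : Vtx.b i ∈ Cset n m ∪ Rinv (Rrel lit m) E) :
    False := by
  rcases endpoint_cases h with ⟨i, -, h⟩ | ⟨i, -, -, h⟩ | ⟨i, j, h⟩ <;> simp at h

lemma not_endpoint_c {E : Set Edge} {i : ℕ} (h : Vtx.c i ∈ Cset n m ∪ Rinv (Rrel lit m) E) :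
    False := by
  rcases endpoint_cases h with ⟨i, -, h⟩ | ⟨i, -, -, h⟩ | ⟨i, j, h⟩ <;> simp at h

lemma not_endpoint_e {E : Set Edge} {i : ℕ} (h : Vtx.e i ∈ Cset n m ∪ Rinv (Rrel lit m) E) :
    False := by
  rcases endpoint_cases h with ⟨i, -, h⟩ | ⟨i, -, -, h⟩ | ⟨i, j, h⟩ <;> simp at h

lemma not_endpoint_f {E : Set Edge} {i : ℕ} (h : Vtx.f i ∈ Cset n m ∪ Rinv (Rrel lit m) E) :
    False := by
  rcases endpoint_cases h with ⟨i, -, h⟩ | ⟨i, -, -, h⟩ | ⟨i, j, h⟩ <;> simp at h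

lemma not_endpoint_d {E : Set Edge} {i : ℕ} (h : Vtx.d i ∈ Cset n m ∪ Rinv (Rrel lit m) E) :
    False := by
  rcases endpoint_cases h with ⟨i, -, h⟩ | ⟨i, -, -, h⟩ | ⟨i, j, h⟩ <;> simp at h

/-- The only legal move from `g k` (for `k + 1 ≤ n - 1`) ends at `g (k+1)` and
goes through the variable component `G(x_{k+1})`. -/
lemma forced_path (hn2 : 2 ≤ n) {k : ℕ} (hk : k + 1 ≤ n - 1)
    {E : Set Edge} (hE : E ⊆ EG n m) {v : Vtx} {E' : Set Edge} {p : List Vtx}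
    (h : LegalMoveVia (Cset n m) (Rrel lit m) (Vtx.g k) E v E' p) :
    v = Vtx.g (k + 1) ∧
    (p = [Vtx.g k, Vtx.a (k+1), Vtx.b (k+1), Vtx.e (k+1), Vtx.d (k+1), Vtx.g (k+1)] ∨
     p = [Vtx.g k, Vtx.a (k+1), Vtx.c (k+1), Vtx.f (k+1), Vtx.d (k+1), Vtx.g (k+1)]) := by
  obtain ⟨-, hv, hlen, -, hhead, hlast, hch, hint, -⟩ := h
  match p, hlen with
  | p0 :: p1 :: rest, _ =>
  obtain rfl : p0 = Vtx.g k := by simpa using hhead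
  rw [List.Chain', List.isChain_cons_cons] at hch
  obtain rfl : p1 = Vtx.a (k + 1) := g_out (by omega) (hE hch.1)
  have hch := hch.2
  match rest with
  | [] =>
    obtain rfl : v = Vtx.a (k+1) := by simpa using hlast.symm
    exact absurd hv (fun h => not_endpoint_a h)
  | p2 :: rest =>
  rw [List.isChain_cons_cons] at hch
  rcases a_out (hE hch.1) with rfl | rfl
  · -- b branch
    have hch := hch.2
    match rest with
    | [] =>
      obtain rfl : v = Vtx.b (k+1) := by simpa using hlast.symm
      exact absurd hv (fun h => not_endpoint_b h)
    | p3 :: rest =>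
    rw [List.isChain_cons_cons] at hch
    obtain rfl : p3 = Vtx.e (k+1) := b_out (hE hch.1)
    have hch := hch.2
    match rest with
    | [] =>
      obtain rfl : v = Vtx.e (k+1) := by simpa using hlast.symm
      exact absurd hv (fun h => not_endpoint_e h)
    | p4 :: rest =>
    rw [List.isChain_cons_cons] at hch
    obtain rfl : p4 = Vtx.d (k+1) := e_out (hE hch.1)
    have hch := hch.2
    match rest with
    | [] =>
      obtain rfl : v = Vtx.d (k+1) := by simpa using hlast.symm
      exact absurd hv (fun h => not_endpoint_d h)
    | p5 :: rest =>
    rw [List.isChain_cons_cons] at hch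
    obtain rfl : p5 = Vtx.g (k+1) := d_out (hE hch.1)
    match rest with
    | [] =>
      obtain rfl : v = Vtx.g (k+1) := by simpa using hlast.symm
      exact ⟨rfl, Or.inl rfl⟩
    | p6 :: rest =>
      exact absurd (Or.inl (g_in_C hk) : Vtx.g (k+1) ∈ _)
        (hint (Vtx.g (k+1)) (by simp [List.dropLast]))
  · -- c branch
    have hch := hch.2
    match rest with
    | [] =>
      obtain rfl : v = Vtx.c (k+1) := by simpa using hlast.symm
      exact absurd hv (fun h => not_endpoint_c h)
    | p3 :: rest =>
    rw [List.isChain_cons_cons] at hch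
    obtain rfl : p3 = Vtx.f (k+1) := c_out (hE hch.1)
    have hch := hch.2
    match rest with
    | [] =>
      obtain rfl : v = Vtx.f (k+1) := by simpa using hlast.symm
      exact absurd hv (fun h => not_endpoint_f h)
    | p4 :: rest =>
    rw [List.isChain_cons_cons] at hch
    obtain rfl : p4 = Vtx.d (k+1) := f_out (hE hch.1)
    have hch := hch.2
    match rest with
    | [] =>
      obtain rfl : v = Vtx.d (k+1) := by simpa using hlast.symm
      exact absurd hv (fun h => not_endpoint_d h)
    | p5 :: rest =>
    rw [List.isChain_cons_cons] at hch
    obtain rfl : p5 = Vtx.g (k+1) := d_out (hE hch.1)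
    match rest with
    | [] =>
      obtain rfl : v = Vtx.g (k+1) := by simpa using hlast.symm
      exact ⟨rfl, Or.inr rfl⟩
    | p6 :: rest =>
      exact absurd (Or.inl (g_in_C hk) : Vtx.g (k+1) ∈ _)
        (hint (Vtx.g (k+1)) (by simp [List.dropLast]))
/-- The edges possibly consumed by the first `k` moves of the play. -/
def used (k : ℕ) : Set Edge :=
  { p | ∃ j, 1 ≤ j ∧ j ≤ k ∧
      (p = (Vtx.g (j-1), Vtx.a j) ∨ p = (Vtx.a j, Vtx.b j) ∨ p = (Vtx.a j, Vtx.c j) ∨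
       p = (Vtx.b j, Vtx.e j) ∨ p = (Vtx.c j, Vtx.f j) ∨ p = (Vtx.e j, Vtx.d j) ∨
       p = (Vtx.f j, Vtx.d j) ∨ p = (Vtx.d j, Vtx.g j)) }

lemma used_mono {k : ℕ} : used k ⊆ used (k + 1) := by
  rintro p ⟨j, h1, h2, h⟩; exact ⟨j, h1, by omega, h⟩

lemma turn_eq (C : Set Vtx) (R : Set (Vtx × Edge)) (s : Vtx) (E0 : Set Edge)
    (P : Play C R s E0) (k : ℕ) :
    P.turn k = if k % 2 = 0 then Player.ex else Player.fa := by
  induction k with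
  | zero => simpa using P.init_turn
  | succ k ih =>
    rw [P.turn_alt, ih]
    rcases Nat.even_or_odd k with h | h
    · rw [Nat.even_iff] at h
      simp [h, Player.other, Nat.succ_mod_two_eq_one_iff.mpr h]
    · rw [Nat.odd_iff] at h
      simp [h, Player.other, Nat.succ_mod_two_eq_zero_iff.mpr h]


/-- The five edges of the canonical `b`-path through `G(x_{k+1})` are present. -/
lemma edges_avail {k : ℕ} (hn2 : 2 ≤ n) (hk : k + 1 ≤ n - 1)
    {E : Set Edge} (hsup : EG n m \ used k ⊆ E) :
    (Vtx.g k, Vtx.a (k+1)) ∈ E ∧ (Vtx.a (k+1), Vtx.b (k+1)) ∈ E ∧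
    (Vtx.b (k+1), Vtx.e (k+1)) ∈ E ∧ (Vtx.e (k+1), Vtx.d (k+1)) ∈ E ∧
    (Vtx.d (k+1), Vtx.g (k+1)) ∈ E := by
  refine ⟨hsup ⟨Or.inr (Or.inl ⟨k, by omega, rfl⟩), ?_⟩,
    hsup ⟨Or.inl ⟨k+1, by omega, by omega, Or.inl rfl⟩, ?_⟩,
    hsup ⟨Or.inl ⟨k+1, by omega, by omega, by tauto⟩, ?_⟩,
    hsup ⟨Or.inl ⟨k+1, by omega, by omega, by tauto⟩, ?_⟩,
    hsup ⟨Or.inl ⟨k+1, by omega, by omega, by tauto⟩, ?_⟩⟩ <;>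
  · rintro ⟨j, hj1, hj2, (h|h|h|h|h|h|h|h)⟩ <;> simp [Prod.ext_iff] at h <;> omega

/-- There is a legal move from `g k` with edge set `E`. -/
lemma move_exists {k : ℕ} (hn2 : 2 ≤ n) (hk : k + 1 ≤ n - 1)
    {E : Set Edge} (hsup : EG n m \ used k ⊆ E) :
    LegalMove (Cset n m) (Rrel lit m) (Vtx.g k) E (Vtx.g (k+1))
      (E \ pathEdges [Vtx.g k, Vtx.a (k+1), Vtx.b (k+1), Vtx.e (k+1), Vtx.d (k+1),
        Vtx.g (k+1)]) := by
  obtain ⟨h1, h2, h3, h4, h5⟩ := edges_avail hn2 hk hsup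
  refine ⟨[Vtx.g k, Vtx.a (k+1), Vtx.b (k+1), Vtx.e (k+1), Vtx.d (k+1), Vtx.g (k+1)],
    g_in_C (by omega), Or.inl (g_in_C (by omega)), by simp, by simp, rfl, by simp, ?_, ?_, rfl⟩
  · simp only [List.Chain', List.isChain_cons_cons, List.isChain_singleton]
    exact ⟨h1, h2, h3, h4, h5, trivial⟩
  · intro w hw
    simp [List.dropLast] at hw
    rcases hw with rfl | rfl | rfl | rfl
    · exact fun h => not_endpoint_a h
    · exact fun h => not_endpoint_b h
    · exact fun h => not_endpoint_e h
    · exact fun h => not_endpoint_d h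

lemma play_inv (hn2 : 2 ≤ n)
    (P : Play (Cset n m) (Rrel lit m) (Vtx.g 0) (EG n m)) :
    ∀ k, k ≤ n - 1 → k ≤ P.len ∧ P.act k = Vtx.g k ∧ P.edg k ⊆ EG n m ∧
      EG n m \ used k ⊆ P.edg k := by
  intro k
  induction k with
  | zero =>
    intro _
    exact ⟨Nat.zero_le _, P.init_act, by rw [P.init_edg],
      by rw [P.init_edg]; exact fun _ h => h.1⟩
  | succ k ih =>
    intro hk1
    obtain ⟨hlen, hact, hsub, hsup⟩ := ih (by omega)
    -- first: k < P.len
    have hklt : k < P.len := by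
      rcases Nat.lt_or_ge k P.len with h | h
      · exact h
      · exfalso
        have hlen_eq : P.len = k := le_antisymm (by omega) hlen
        rcases P.maximal with ⟨hpos, hwin⟩ | hno
        · rw [hlen_eq, hact] at hwin
          obtain ⟨i, j, hij⟩ := rinv_sub hwin
          simp at hij
        · rw [hlen_eq, hact] at hno
          exact hno _ _ (move_exists hn2 hk1 hsup)
    have hstep := P.step k hklt
    rw [hact] at hstep
    obtain ⟨p, hp⟩ := hstep
    have hEdel : P.edg (k+1) = P.edg k \ pathEdges p := hp.2.2.2.2.2.2.2.2
    obtain ⟨hv, hpcases⟩ := forced_path hn2 hk1 hsub hp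
    have hedges : pathEdges p ⊆ used (k + 1) := by
      rcases hpcases with rfl | rfl <;>
      · intro e he
        simp [pathEdges] at he
        rcases he with rfl | rfl | rfl | rfl | rfl <;>
          exact ⟨k+1, by omega, le_rfl, by simp⟩
    refine ⟨by omega, hv, ?_, ?_⟩
    · rw [hEdel]; exact fun e he => hsub he.1
    · intro e he
      rw [hEdel]
      exact ⟨hsup ⟨he.1, fun hu => he.2 (used_mono hu)⟩, fun hpe => he.2 (hedges hpe)⟩

end Helpers

/-- In every play of the graph game on `(G, C, s, R)`, for each
`i = 1, …, n-1` the `i`-th move of the play goes from active vertex `g_{i-1}` to `gᵢ`,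
and this move is made by the ∃-player if `i` is odd and by the ∀-player if `i` is
even. -/
theorem ith_move_traverses_variable_component
    (n m : ℕ) (hn : Even n) (hn2 : 2 ≤ n) (hm : 1 ≤ m)
    (lit : ℕ → ℕ → Lit) (hwf : LitWF n m lit)
    (P : Play (Cset n m) (Rrel lit m) (Vtx.g 0) (EG n m))
    (i : ℕ) (hi1 : 1 ≤ i) (hi2 : i ≤ n - 1) :
    i ≤ P.len ∧ P.act (i - 1) = Vtx.g (i - 1) ∧ P.act i = Vtx.g i ∧
    ((Odd i → P.turn (i - 1) = Player.ex) ∧ (Even i → P.turn (i - 1) = Player.fa)) := by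
  obtain ⟨hlen, hact, -, -⟩ := play_inv hn2 P i hi2
  obtain ⟨-, hact', -, -⟩ := play_inv hn2 P (i - 1) (by omega)
  refine ⟨hlen, hact', hact, ?_, ?_⟩
  · intro hodd
    rw [Nat.odd_iff] at hodd
    rw [turn_eq, if_pos (by omega)]
  · intro heven
    rw [Nat.even_iff] at heven
    rw [turn_eq, if_neg (by omega)]

end PhutballQBF
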